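/- Let T be a bounded linear operator on a complex Hilbert space whose numerical range is contained in the Stolz domain D_r, the convex hull of {z : |z| ≤ r} ∪ {1}, for some r ∈ (0,1). Then T is a Ritt operator: there exists C such that ‖(zI − T)⁻¹‖ ≤ C/|z − 1| for all |z| > 1. -/

import Mathlib

open Filter Topology

open scoped InnerProductSpace ComplexConjugate

/-- Geometric fact: points of the Stolz domain `conv(closedBall 0 r ∪ {1})` stay at
distance at least `(1-r)/2 * ‖z-1‖` from any `z` with `‖z‖ > 1`. -/
lemma stolz_dist {r : ℝ} (hr0 : 0 ≤ r) (hr1 : r < 1) {w z : ℂ}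
    (hw : w ∈ convexHull ℝ (Metric.closedBall (0 : ℂ) r ∪ {1}))
    (hz : 1 < ‖z‖) : (1 - r) / 2 * ‖z - 1‖ ≤ ‖z - w‖ := by
  rw [Set.union_singleton, convexHull_insert ⟨0, by simp [hr0]⟩,
    (convex_closedBall (0 : ℂ) r).convexHull_eq, mem_convexJoin] at hw
  obtain ⟨p, hp, u, hu, hseg⟩ := hw
  rw [Set.mem_singleton_iff] at hp
  subst hp
  obtain ⟨b, a, hb, ha, hab, rfl⟩ := hseg
  rw [Metric.mem_closedBall, dist_zero_right] at hu
  have hab' : (b : ℂ) + a = 1 := by exact_mod_cast hab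
  set w : ℂ := b • (1 : ℂ) + a • u with hwdef
  have hw1 : (1 : ℂ) - w = a • ((1 : ℂ) - u) := by
    simp only [hwdef, Complex.real_smul]
    linear_combination -hab'
  have hN : ‖(1 : ℂ) - w‖ ≤ a * (1 + r) := by
    rw [hw1, norm_smul, Real.norm_eq_abs, abs_of_nonneg ha]
    have : ‖(1 : ℂ) - u‖ ≤ 1 + r := by
      calc ‖(1 : ℂ) - u‖ ≤ ‖(1 : ℂ)‖ + ‖u‖ := norm_sub_le _ _
        _ ≤ 1 + r := by rw [norm_one]; linarith
    nlinarith
  have hWn : ‖w‖ ≤ b + a * r := by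
    calc ‖w‖ ≤ ‖b • (1 : ℂ)‖ + ‖a • u‖ := norm_add_le _ _
      _ = b * 1 + a * ‖u‖ := by
          rw [norm_smul, norm_smul, Real.norm_eq_abs, Real.norm_eq_abs,
            abs_of_nonneg ha, abs_of_nonneg hb, norm_one]
      _ ≤ b + a * r := by nlinarith
  have h1 : ‖z‖ - ‖w‖ ≤ ‖z - w‖ := norm_sub_norm_le _ _
  have h2 : ‖z - 1‖ ≤ ‖z - w‖ + ‖(1 : ℂ) - w‖ := by
    have := norm_sub_le (z - w) ((1 : ℂ) - w)
    simpa using this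
  have hM : (0 : ℝ) ≤ ‖z - 1‖ := norm_nonneg _
  rcases le_or_gt a (‖z - 1‖ / 2) with hc | hc
  · nlinarith
  · nlinarith

/-- From a lower bound on unit vectors, get a global lower bound. -/
lemma lower_bound_all {X : Type*} [NormedAddCommGroup X] [InnerProductSpace ℂ X]
    (A : X →L[ℂ] X) (m : ℝ) (hm : 0 ≤ m) (h : ∀ x : X, ‖x‖ = 1 → m ≤ ‖A x‖) :
    ∀ x : X, m * ‖x‖ ≤ ‖A x‖ := by
  intro x
  rcases eq_or_ne x 0 with rfl | hx
  · simp
  · have hxn : ‖x‖ ≠ 0 := norm_ne_zero_iff.mpr hx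
    have h1 : ‖((‖x‖ : ℂ)⁻¹ • x)‖ = 1 := by
      rw [norm_smul, norm_inv, Complex.norm_real, Real.norm_eq_abs,
        abs_of_nonneg (norm_nonneg x)]
      field_simp
    have := h _ h1
    rw [map_smul, norm_smul, norm_inv, Complex.norm_real, Real.norm_eq_abs,
      abs_of_nonneg (norm_nonneg x)] at this
    have h2 : m * ‖x‖ ≤ ‖x‖⁻¹ * ‖A x‖ * ‖x‖ := by nlinarith [norm_nonneg x]
    calc m * ‖x‖ ≤ ‖x‖⁻¹ * ‖A x‖ * ‖x‖ := h2
      _ = ‖A x‖ := by field_simp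

/-- An operator on a Hilbert space whose numerical range lies in a Stolz domain
`D_r = conv(r·closed disc ∪ {1})`, `r ∈ (0,1)`, is a Ritt operator. -/
theorem stmt15 {X : Type*} [NormedAddCommGroup X] [InnerProductSpace ℂ X] [CompleteSpace X]
    (T : X →L[ℂ] X) (r : ℝ) (hr0 : 0 < r) (hr1 : r < 1)
    (hW : ∀ x : X, ‖x‖ = 1 →
      (inner ℂ (T x) x : ℂ) ∈ convexHull ℝ (Metric.closedBall (0 : ℂ) r ∪ {1})) :
    ∃ C : ℝ, 0 < C ∧ ∀ z : ℂ, 1 < ‖z‖ → z ∈ resolventSet ℂ T ∧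
      ‖Ring.inverse (algebraMap ℂ (X →L[ℂ] X) z - T)‖ ≤ C / ‖z - 1‖ := by
  set c : ℝ := (1 - r) / 2 with hcdef
  have hc : 0 < c := by simp only [hcdef]; linarith
  have hr1' : (0:ℝ) < 1 - r := by linarith
  refine ⟨2 / (1 - r), by positivity, fun z hz => ?_⟩
  set A : X →L[ℂ] X := algebraMap ℂ (X →L[ℂ] X) z - T with hAdef
  have hz1 : 0 < ‖z - 1‖ := by
    have := norm_sub_norm_le z 1
    simp only [norm_one] at this
    linarith
  set d : ℝ := c * ‖z - 1‖ with hddef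
  have hd : 0 < d := mul_pos hc hz1
  -- numerical range estimate for A on unit vectors
  have hinner : ∀ x : X, ‖x‖ = 1 → d ≤ ‖(inner ℂ (A x) x : ℂ)‖ := by
    intro x hx
    have hwx := hW x hx
    have hAx : (inner ℂ (A x) x : ℂ) = conj z - inner ℂ (T x) x := by
      have hax : A x = z • x - T x := by
        simp [hAdef, Algebra.algebraMap_eq_smul_one]
      rw [hax, inner_sub_left, inner_smul_left, inner_self_eq_norm_sq_to_K, hx]
      push_cast
      ring
    rw [hAx]
    have hzc : (1 : ℝ) < ‖conj z‖ := by rwa [RCLike.norm_conj]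
    have := stolz_dist (le_of_lt hr0) hr1 hwx hzc
    have hconj : ‖conj z - 1‖ = ‖z - 1‖ := by
      rw [show (conj z - 1 : ℂ) = conj (z - 1) by simp, RCLike.norm_conj]
    rw [hconj] at this
    exact this
  have hAu : ∀ x : X, ‖x‖ = 1 → d ≤ ‖A x‖ := by
    intro x hx
    have h1 := hinner x hx
    have h2 : ‖(inner ℂ (A x) x : ℂ)‖ ≤ ‖A x‖ * ‖x‖ := norm_inner_le_norm _ _
    rw [hx, mul_one] at h2
    linarith
  have hA : ∀ x : X, d * ‖x‖ ≤ ‖A x‖ := lower_bound_all A d hd.le hAu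
  -- adjoint bound
  have hAadj : ∀ x : X, d * ‖x‖ ≤ ‖(ContinuousLinearMap.adjoint A) x‖ := by
    refine lower_bound_all _ d hd.le fun x hx => ?_
    have h1 : (inner ℂ ((ContinuousLinearMap.adjoint A) x) x : ℂ)
        = conj (inner ℂ (A x) x : ℂ) := by
      rw [ContinuousLinearMap.adjoint_inner_left, ← inner_conj_symm]
    have h2 : ‖(inner ℂ ((ContinuousLinearMap.adjoint A) x) x : ℂ)‖
        = ‖(inner ℂ (A x) x : ℂ)‖ := by rw [h1, RCLike.norm_conj]
    have h3 := hinner x hx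
    have h4 : ‖(inner ℂ ((ContinuousLinearMap.adjoint A) x) x : ℂ)‖
        ≤ ‖(ContinuousLinearMap.adjoint A) x‖ * ‖x‖ := norm_inner_le_norm _ _
    rw [hx, mul_one] at h4
    linarith [h2 ▸ h3]
  -- antilipschitz, injectivity, closed range
  have hbound : ∀ x : X, ‖x‖ ≤ (d⁻¹).toNNReal * ‖A x‖ := by
    intro x
    rw [Real.coe_toNNReal _ (inv_nonneg.mpr hd.le)]
    calc ‖x‖ = d⁻¹ * (d * ‖x‖) := by field_simp
      _ ≤ d⁻¹ * ‖A x‖ := mul_le_mul_of_nonneg_left (hA x) (inv_nonneg.mpr hd.le)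
  have hanti := A.antilipschitz_of_bound hbound
  have hinj : Function.Injective A := hanti.injective
  have hclosed : IsClosed ((LinearMap.range (A : X →ₗ[ℂ] X) : Submodule ℂ X) : Set X) := by
    have := hanti.isClosed_range A.uniformContinuous
    rw [LinearMap.coe_range]; exact this
  haveI : CompleteSpace (LinearMap.range (A : X →ₗ[ℂ] X)) := hclosed.completeSpace_coe
  have horth : (LinearMap.range (A : X →ₗ[ℂ] X))ᗮ = ⊥ := by
    rw [Submodule.eq_bot_iff]
    intro v hv
    rw [Submodule.mem_orthogonal] at hv
    have h1 : (inner ℂ (A ((ContinuousLinearMap.adjoint A) v)) v : ℂ) = 0 :=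
      hv _ ⟨(ContinuousLinearMap.adjoint A) v, rfl⟩
    have h2 : (inner ℂ ((ContinuousLinearMap.adjoint A) v)
        ((ContinuousLinearMap.adjoint A) v) : ℂ)
        = inner ℂ v (A ((ContinuousLinearMap.adjoint A) v)) :=
      ContinuousLinearMap.adjoint_inner_left A ((ContinuousLinearMap.adjoint A) v) v
    have h3 : (inner ℂ v (A ((ContinuousLinearMap.adjoint A) v)) : ℂ) = 0 := by
      rw [← inner_conj_symm, h1, map_zero]
    have h4 : (ContinuousLinearMap.adjoint A) v = 0 :=
      inner_self_eq_zero.mp (h2.trans h3)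
    have h5 := hAadj v
    rw [h4, norm_zero] at h5
    have : ‖v‖ ≤ 0 := by nlinarith
    exact norm_le_zero_iff.mp this
  have hsurj : LinearMap.range (A : X →ₗ[ℂ] X) = ⊤ := Submodule.orthogonal_eq_bot_iff.mp horth
  have hU : IsUnit A := ContinuousLinearMap.isUnit_iff_bijective.mpr
    ⟨hinj, LinearMap.range_eq_top.mp hsurj⟩
  refine ⟨spectrum.mem_resolventSet_iff.mpr hU, ?_⟩
  have hinv : Ring.inverse A = ((hU.unit⁻¹ : (X →L[ℂ] X)ˣ) : X →L[ℂ] X) := by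
    have h := Ring.inverse_unit hU.unit
    rwa [hU.unit_spec] at h
  have key : ∀ y : X, A (((hU.unit⁻¹ : (X →L[ℂ] X)ˣ) : X →L[ℂ] X) y) = y := by
    intro y
    have h1 : (hU.unit : X →L[ℂ] X) * ↑hU.unit⁻¹ = 1 := hU.unit.mul_inv
    have h2 : ((hU.unit : X →L[ℂ] X) * ↑hU.unit⁻¹) y = y := by rw [h1]; rfl
    rw [ContinuousLinearMap.mul_apply, hU.unit_spec] at h2
    exact h2
  rw [hinv]
  refine ContinuousLinearMap.opNorm_le_bound _ (by positivity) fun y => ?_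
  have h1 := hA (((hU.unit⁻¹ : (X →L[ℂ] X)ˣ) : X →L[ℂ] X) y)
  rw [key y] at h1
  rw [div_mul_eq_mul_div, le_div_iff₀ hz1]
  have hCpos : (0:ℝ) < 2 / (1 - r) := by positivity
  have hcc : c * (2 / (1 - r)) = 1 := by
    rw [hcdef]; field_simp
  nlinarith [mul_le_mul_of_nonneg_left h1 hCpos.le,
    norm_nonneg (((hU.unit⁻¹ : (X →L[ℂ] X)ˣ) : X →L[ℂ] X) y), norm_nonneg y]
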